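/- Let s ∈ (0,1) be irrational. If Rⁿ(s) > 1/2 for every even integer n ≥ 0 and Rⁿ(s) ∈ (1/4, 1/2) for every odd integer n ≥ 1, then s = √2/2. -/

import Mathlib

/-- The renormalization map `R : (0,1) → [0,1)`: `R(x) = 1 − x` if `x ≥ 1/2`, and
`R(x) = 1/(2x) − ⌊1/(2x)⌋` if `x < 1/2`. -/
noncomputable def Rmap (x : ℝ) : ℝ :=
  if x < 1/2 then 1 / (2 * x) - ⌊1 / (2 * x)⌋ else 1 - x

/-- The Gauss map `γ(x) = 1/x − ⌊1/x⌋`. -/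
noncomputable def gaussMap (x : ℝ) : ℝ := 1 / x - ⌊1 / x⌋

lemma Rmap_two_step (x : ℝ) (h1 : 1/2 < x) (h2 : x < 3/4) :
    Rmap^[2] x = 1/(2*(1-x)) - 1 := by
  have hx : ¬ x < 1/2 := by linarith
  have e1 : Rmap x = 1 - x := by rw [Rmap, if_neg hx]
  have h1x : (1 : ℝ) - x < 1/2 := by linarith
  have h1x' : (1 : ℝ)/4 < 1 - x := by linarith
  have hy1 : (1 : ℝ) ≤ 1/(2*(1-x)) := by
    rw [le_div_iff₀ (by linarith)]; linarith
  have hy2 : 1/(2*(1-x)) < 2 := by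
    rw [div_lt_iff₀ (by linarith)]; linarith
  have hfloor : ⌊1/(2*(1-x))⌋ = 1 := by
    rw [Int.floor_eq_iff]
    push_cast
    exact ⟨hy1, by linarith⟩
  have : Rmap^[2] x = Rmap (Rmap x) := rfl
  rw [this, e1, Rmap, if_pos h1x, hfloor]
  norm_num

/-- Let `s ∈ (0,1)` be irrational.  If `Rⁿ(s) > 1/2` for every even
`n ≥ 0` and `Rⁿ(s) ∈ (1/4, 1/2)` for every odd `n ≥ 1`, then `s = √2/2`. -/
theorem R_orbit_forces_sqrt_two (s : ℝ) (hs : s ∈ Set.Ioo (0 : ℝ) 1) (hirr : Irrational s)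
    (heven : ∀ n : ℕ, Even n → 1/2 < Rmap^[n] s)
    (hodd : ∀ n : ℕ, Odd n → Rmap^[n] s ∈ Set.Ioo (1/4 : ℝ) (1/2)) :
    s = Real.sqrt 2 / 2 := by
  set α : ℝ := Real.sqrt 2 / 2 with hαdef
  have hsq : Real.sqrt 2 ^ 2 = 2 := Real.sq_sqrt (by norm_num)
  have hnn : (0:ℝ) ≤ Real.sqrt 2 := Real.sqrt_nonneg 2
  have hα1 : 1/2 < α := by rw [hαdef]; nlinarith
  have hα2 : α < 3/4 := by rw [hαdef]; nlinarith
  have hαsq : α^2 = 1/2 := by rw [hαdef]; field_simp; nlinarith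
  -- bounds on even iterates
  have hbound : ∀ n : ℕ, 1/2 < Rmap^[2*n] s ∧ Rmap^[2*n] s < 3/4 := by
    intro n
    have h1 := heven (2*n) ⟨n, by ring⟩
    have h2 := hodd (2*n+1) ⟨n, rfl⟩
    have e : Rmap^[2*n+1] s = 1 - Rmap^[2*n] s := by
      rw [Function.iterate_succ_apply', Rmap, if_neg (by linarith)]
    rw [e] at h2
    exact ⟨h1, by obtain ⟨ha, hb⟩ := h2; linarith⟩
  have hstep : ∀ n : ℕ, Rmap^[2*(n+1)] s = 1/(2*(1 - Rmap^[2*n] s)) - 1 := by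
    intro n
    have hb := hbound n
    have e : Rmap^[2*(n+1)] s = Rmap^[2] (Rmap^[2*n] s) := by
      rw [← Function.iterate_add_apply]
      congr 1
      ring
    rw [e, Rmap_two_step _ hb.1 hb.2]
  -- growth of error
  have hgrow : ∀ n : ℕ, 2^n * |s - α| ≤ |Rmap^[2*n] s - α| := by
    intro n
    induction n with
    | zero => simp
    | succ n ih =>
      have hb := hbound n
      set x := Rmap^[2*n] s with hx
      have hD : (0:ℝ) < 2*(1-x)*(1-α) := by nlinarith
      have hD2 : 2*(1-x)*(1-α) < 1/2 := by nlinarith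
      have key : (Rmap^[2*(n+1)] s - α) * (2*(1-x)*(1-α)) = x - α := by
        rw [hstep n, ← hx]
        have h1x : (1:ℝ) - x ≠ 0 := by intro h; nlinarith
        field_simp
        linear_combination ((1-x)/2) * hsq
      have habs : |Rmap^[2*(n+1)] s - α| * (2*(1-x)*(1-α)) = |x - α| := by
        rw [← abs_of_pos hD, ← abs_mul, key]
      have h2le : 2 * |x - α| ≤ |Rmap^[2*(n+1)] s - α| := by
        nlinarith [abs_nonneg (Rmap^[2*(n+1)] s - α), abs_nonneg (x - α)]
      calc 2^(n+1) * |s - α| = 2 * (2^n * |s - α|) := by ring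
        _ ≤ 2 * |x - α| := by linarith
        _ ≤ _ := h2le
  -- conclude
  have hsmall : ∀ n : ℕ, 2^n * |s - α| ≤ 1 := by
    intro n
    have hb := hbound n
    have : |Rmap^[2*n] s - α| ≤ 1 := by
      rw [abs_le]; constructor <;> nlinarith [hb.1, hb.2]
    linarith [hgrow n]
  by_contra hne
  have hpos : 0 < |s - α| := abs_pos.mpr (sub_ne_zero.mpr hne)
  obtain ⟨n, hn⟩ := pow_unbounded_of_one_lt (1 / |s - α|) (one_lt_two (α := ℝ))
  have := hsmall n
  rw [div_lt_iff₀ hpos] at hn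
  nlinarith
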